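/- Let ε > 0 and let K : ℝ³ → ℝ^{3×3×3×3} be C¹ satisfying the pointwise bound ‖DK(s)‖ ≤ C₀/(ε √(ε² + |s|²)) for all s ∈ ℝ³, for some C₀ > 0. Let γ : ℝ → ℝ³ be Lipschitz and L-periodic with |γ′(s)| = 1 a.e., let b ∈ ℝ³, and let ν denote the pushforward under γ of Lebesgue measure on [0, L] (so ν(ℝ³) = L). Suppose there is Θ > 0 such that ν(closedBall(x, r)) ≤ Θ r for every x ∈ ℝ³ and r > 0. Then the Peach–Koehler force f along γ (defined below) satisfies, for a.e. s, |f(s)| ≤ c (C₀ |b|² Θ / ε) log(1 + 2L/(ε Θ)), where c is a constant depending only on the dimension. -/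

import Mathlib

open MeasureTheory
open scoped BigOperators RealInnerProductSpace

noncomputable section

/-- The Levi-Civita alternating tensor on `ℝ³`. -/
def levi (i j k : Fin 3) : ℝ :=
  ((j : ℝ) - (i : ℝ)) * ((k : ℝ) - (j : ℝ)) * ((k : ℝ) - (i : ℝ)) / 2

/-- `G_k(s) = ∫₀^L 𝖠_{klm} ∂_m K_{alcd}(γ(s) − γ(t)) b_a b_c γ′_d(t) dt`. -/
def pkG (K : EuclideanSpace ℝ (Fin 3) → Fin 3 → Fin 3 → Fin 3 → Fin 3 → ℝ)
    (γ : ℝ → EuclideanSpace ℝ (Fin 3)) (L : ℝ) (b : EuclideanSpace ℝ (Fin 3))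
    (s : ℝ) (k : Fin 3) : ℝ :=
  ∫ t in (0 : ℝ)..L, ∑ l, ∑ m, ∑ a, ∑ c, ∑ d,
    levi k l m *
      (fderiv ℝ K (γ s - γ t) (EuclideanSpace.single m (1 : ℝ)) a l c d) *
      b a * b c * (deriv γ t d)

/-- The Peach–Koehler force along a parametrized closed curve:
`f(s) = G(s) × γ′(s)`, i.e. `f_i(s) = 𝖠_{ilm} G_l(s) γ′_m(s)`. -/
def pkF (K : EuclideanSpace ℝ (Fin 3) → Fin 3 → Fin 3 → Fin 3 → Fin 3 → ℝ)
    (γ : ℝ → EuclideanSpace ℝ (Fin 3)) (L : ℝ) (b : EuclideanSpace ℝ (Fin 3))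
    (s : ℝ) : EuclideanSpace ℝ (Fin 3) :=
  (WithLp.equiv 2 (Fin 3 → ℝ)).symm
    (fun i => ∑ l, ∑ m, levi i l m * pkG K γ L b s l * (deriv γ s m))

/-! ### Auxiliary lemmas -/

lemma levi_abs_le (i j k : Fin 3) : |levi i j k| ≤ 1 := by
  fin_cases i <;> fin_cases j <;> fin_cases k <;> norm_num [levi]

lemma coord_abs_le_norm (v : EuclideanSpace ℝ (Fin 3)) (i : Fin 3) : |v i| ≤ ‖v‖ := by
  rw [EuclideanSpace.norm_eq]
  have h1 : |v i| = Real.sqrt (‖v i‖ ^ 2) := by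
    rw [Real.sqrt_sq_eq_abs]; simp [abs_abs]
  rw [h1]
  apply Real.sqrt_le_sqrt
  exact Finset.single_le_sum (f := fun j => ‖v j‖ ^ 2) (fun j _ => by positivity) (Finset.mem_univ i)

lemma dyadic_ptwise (ε d : ℝ) (hε : 0 < ε) (hd : 0 ≤ d) (N : ℕ) :
    (Real.sqrt (ε ^ 2 + d ^ 2))⁻¹ ≤
      1 / (2 ^ N * ε) +
        ∑ j ∈ Finset.range N, (1 / (2 ^ (j + 1) * ε)) * (if d ≤ 2 ^ (j + 1) * ε then 1 else 0) := by
  induction N with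
  | zero =>
    simp only [Finset.range_zero, Finset.sum_empty, add_zero, pow_zero, one_mul]
    rw [div_eq_inv_mul, mul_one]
    apply inv_anti₀ hε
    calc ε = Real.sqrt (ε ^ 2) := (Real.sqrt_sq hε.le).symm
    _ ≤ _ := Real.sqrt_le_sqrt (by nlinarith)
  | succ N ih =>
    rw [Finset.sum_range_succ]
    by_cases hcase : d ≤ 2 ^ (N + 1) * ε
    · simp only [hcase, if_true, mul_one]
      have : 1 / (2 ^ (N+1) * ε) + 1 / (2 ^ (N+1) * ε) = 1 / (2^N * ε) := by
        field_simp; ring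
      linarith [ih]
    · push_neg at hcase
      have h1 : (Real.sqrt (ε ^ 2 + d ^ 2))⁻¹ ≤ 1 / (2 ^ (N+1) * ε) := by
        rw [one_div]
        apply inv_anti₀ (by positivity)
        calc (2:ℝ) ^ (N+1) * ε ≤ d := hcase.le
        _ = Real.sqrt (d ^ 2) := (Real.sqrt_sq hd).symm
        _ ≤ _ := Real.sqrt_le_sqrt (by nlinarith)
      have h2 : (0:ℝ) ≤ ∑ j ∈ Finset.range N, (1 / (2 ^ (j + 1) * ε)) * (if d ≤ 2 ^ (j + 1) * ε then 1 else 0) := by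
        apply Finset.sum_nonneg; intro j _; positivity
      simp only [hcase.not_ge, if_false, mul_zero, add_zero]
      linarith

lemma nu_int_bound (ε Θ L : ℝ) (hε : 0 < ε) (hΘ : 0 < Θ) (hL : 0 < L)
    (γ : ℝ → EuclideanSpace ℝ (Fin 3)) (hγc : Continuous γ)
    (hmass : ∀ (x : EuclideanSpace ℝ (Fin 3)) (r : ℝ), 0 < r →
      Measure.map γ (volume.restrict (Set.Icc (0 : ℝ) L)) (Metric.closedBall x r) ≤
        ENNReal.ofReal (Θ * r))
    (p : EuclideanSpace ℝ (Fin 3)) (N : ℕ) :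
    ∫ t in (0:ℝ)..L, (Real.sqrt (ε ^ 2 + ‖p - γ t‖ ^ 2))⁻¹ ≤ L / (2 ^ N * ε) + N * Θ := by
  set ν := Measure.map γ (volume.restrict (Set.Icc (0 : ℝ) L)) with hν
  have hγm : Measurable γ := hγc.measurable
  have hνuniv : ν Set.univ = ENNReal.ofReal L := by
    rw [hν, Measure.map_apply hγm MeasurableSet.univ]
    simp [Real.volume_Icc, hL.le]
  have hfin : IsFiniteMeasure ν := by
    constructor; rw [hνuniv]; exact ENNReal.ofReal_lt_top
  set ψ : EuclideanSpace ℝ (Fin 3) → ℝ := fun x => (Real.sqrt (ε ^ 2 + ‖p - x‖ ^ 2))⁻¹ with hψ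
  have hψc : Continuous ψ := by
    apply Continuous.inv₀
    · exact (continuous_const.add (((continuous_const.sub continuous_id).norm).pow 2)).sqrt
    · intro x
      have : ε ≤ Real.sqrt (ε ^ 2 + ‖p - x‖ ^ 2) := by
        calc ε = Real.sqrt (ε ^ 2) := (Real.sqrt_sq hε.le).symm
        _ ≤ _ := Real.sqrt_le_sqrt (le_add_of_nonneg_right (by positivity))
      exact ne_of_gt (lt_of_lt_of_le hε this)
  have heq : ∫ t in (0:ℝ)..L, ψ (γ t) = ∫ x, ψ x ∂ν := by
    rw [intervalIntegral.integral_of_le hL.le, ← integral_Icc_eq_integral_Ioc,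
      hν, integral_map hγm.aemeasurable (hψc.aestronglyMeasurable)]
  set h : EuclideanSpace ℝ (Fin 3) → ℝ := fun x => 1 / (2 ^ N * ε) +
      ∑ j ∈ Finset.range N, (1 / (2 ^ (j + 1) * ε)) *
        (Metric.closedBall p (2 ^ (j + 1) * ε)).indicator (fun _ => (1:ℝ)) x with hh
  have hint : Integrable h ν := by
    apply Integrable.add (integrable_const _)
    apply integrable_finset_sum
    intro j _
    exact ((integrable_const (1:ℝ)).indicator Metric.isClosed_closedBall.measurableSet).const_mul _
  have hle : ∀ x, ψ x ≤ h x := by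
    intro x
    refine (dyadic_ptwise ε ‖p - x‖ hε (norm_nonneg _) N).trans (le_of_eq ?_)
    rw [hh]
    simp only
    congr 1
    refine Finset.sum_congr rfl (fun j _ => ?_)
    congr 1
    classical
    rw [Set.indicator_apply]
    have hiff : x ∈ Metric.closedBall p (2 ^ (j + 1) * ε) ↔ ‖p - x‖ ≤ 2 ^ (j + 1) * ε := by
      rw [Metric.mem_closedBall, dist_comm, dist_eq_norm, norm_sub_rev]
    by_cases hc : ‖p - x‖ ≤ 2 ^ (j + 1) * ε
    · simp [hc, hiff.mpr hc]
    · simp [hc, hiff]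
  have hmono : ∫ x, ψ x ∂ν ≤ ∫ x, h x ∂ν := by
    apply integral_mono_of_nonneg
    · filter_upwards with x
      have : 0 < Real.sqrt (ε ^ 2 + ‖p - x‖ ^ 2) := by
        apply Real.sqrt_pos.mpr; positivity
      positivity
    · exact hint
    · filter_upwards with x; exact hle x
  have hcomp : ∫ x, h x ∂ν ≤ L / (2 ^ N * ε) + N * Θ := by
    rw [hh]
    rw [integral_add (integrable_const _) (by
      apply integrable_finset_sum; intro j _
      exact ((integrable_const (1:ℝ)).indicator Metric.isClosed_closedBall.measurableSet).const_mul _)]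
    rw [integral_const, integral_finset_sum _ (fun j _ =>
      ((integrable_const (1:ℝ)).indicator Metric.isClosed_closedBall.measurableSet).const_mul _)]
    have h1 : ν.real Set.univ • (1 / (2 ^ N * ε)) = L / (2 ^ N * ε) := by
      rw [Measure.real, hνuniv, ENNReal.toReal_ofReal hL.le, smul_eq_mul, mul_one_div]
    rw [h1]
    gcongr L / (2 ^ N * ε) + ?_
    have h2 : ∀ j ∈ Finset.range N,
        ∫ x, (1 / (2 ^ (j + 1) * ε)) *
          (Metric.closedBall p (2 ^ (j + 1) * ε)).indicator (fun _ => (1:ℝ)) x ∂ν ≤ Θ := by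
      intro j _
      rw [integral_const_mul, integral_indicator_const (1:ℝ) Metric.isClosed_closedBall.measurableSet]
      have hr : (0:ℝ) < 2 ^ (j + 1) * ε := by positivity
      have := hmass p _ hr
      have hball : (ν (Metric.closedBall p (2 ^ (j + 1) * ε))).toReal ≤ Θ * (2 ^ (j + 1) * ε) :=
        ENNReal.toReal_le_of_le_ofReal (by positivity) this
      rw [smul_eq_mul, mul_one]
      calc 1 / (2 ^ (j + 1) * ε) * (ν (Metric.closedBall p (2 ^ (j + 1) * ε))).toReal
          ≤ 1 / (2 ^ (j + 1) * ε) * (Θ * (2 ^ (j + 1) * ε)) := by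
            apply mul_le_mul_of_nonneg_left hball (by positivity)
        _ = Θ := by field_simp
    calc ∑ j ∈ Finset.range N, ∫ x, (1 / (2 ^ (j + 1) * ε)) *
          (Metric.closedBall p (2 ^ (j + 1) * ε)).indicator (fun _ => (1:ℝ)) x ∂ν
        ≤ ∑ j ∈ Finset.range N, Θ := Finset.sum_le_sum h2
      _ = N * Θ := by rw [Finset.sum_const, Finset.card_range, nsmul_eq_mul]
  calc ∫ t in (0:ℝ)..L, ψ (γ t) = ∫ x, ψ x ∂ν := heq
    _ ≤ _ := hmono.trans hcomp

lemma log_one_add_ge (x : ℝ) (hx : 0 ≤ x) : x / (1 + x) ≤ Real.log (1 + x) := by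
  have h1 : (0:ℝ) < 1 + x := by linarith
  have := Real.log_le_sub_one_of_pos (x := (1+x)⁻¹) (by positivity)
  rw [Real.log_inv] at this
  have h2 : (1+x)⁻¹ - 1 = -(x/(1+x)) := by field_simp; ring
  linarith [this, h2 ▸ this]

lemma arith_bound (ε Θ L J : ℝ) (hε : 0 < ε) (hΘ : 0 < Θ) (hL : 0 < L)
    (hJ : ∀ N : ℕ, J ≤ L / (2 ^ N * ε) + N * Θ) :
    J ≤ 5 * Θ * Real.log (1 + 2 * L / (ε * Θ)) := by
  set x := 2 * L / (ε * Θ) with hxdef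
  have hx0 : 0 < x := by positivity
  have hlog := log_one_add_ge x hx0.le
  have hLx : L = x * ε * Θ / 2 := by rw [hxdef]; field_simp
  rcases le_or_gt x 1 with hx1 | hx1
  · have h0 := hJ 0
    simp only [pow_zero, one_mul, Nat.cast_zero, zero_mul, add_zero] at h0
    have h2 : x / (1 + x) ≥ x / 2 := by
      apply div_le_div_of_nonneg_left hx0.le (by linarith) (by linarith)
    have h3 : L / ε = Θ * x / 2 := by rw [hLx]; field_simp
    nlinarith [Real.log_nonneg (by linarith : (1:ℝ) ≤ 1 + x)]
  · set N := ⌈Real.logb 2 x⌉₊ with hNdef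
    have hlogb0 : 0 ≤ Real.logb 2 x := Real.logb_nonneg (by norm_num) hx1.le
    have hxle : x ≤ 2 ^ N := by
      have h : Real.logb 2 x ≤ (N:ℝ) := Nat.le_ceil _
      calc x = 2 ^ Real.logb 2 x := (Real.rpow_logb two_pos (by norm_num) hx0).symm
        _ ≤ (2:ℝ) ^ (N:ℝ) := Real.rpow_le_rpow_of_exponent_le one_le_two h
        _ = 2 ^ N := by rw [Real.rpow_natCast]
    have hNle : (N:ℝ) ≤ Real.logb 2 x + 1 := (Nat.ceil_lt_add_one hlogb0).le
    have h2N : (0:ℝ) < 2 ^ N := by positivity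
    have htail : L / (2 ^ N * ε) ≤ Θ := by
      rw [div_le_iff₀ (by positivity), hLx]
      nlinarith
    have hJN : J ≤ (N + 1) * Θ := by
      have := hJ N
      nlinarith
    have l2 : (0.6931471803:ℝ) < Real.log 2 := Real.log_two_gt_d9
    have hA2 : Real.log 2 ≤ Real.log (1 + x) := Real.log_le_log (by norm_num) (by linarith)
    have hxA : Real.log x ≤ Real.log (1 + x) := Real.log_le_log hx0 (by linarith)
    have hlx0 : 0 ≤ Real.log x := Real.log_nonneg hx1.le
    have hNb : (N:ℝ) ≤ Real.log x / Real.log 2 + 1 := by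
      rwa [Real.logb] at hNle
    have key : (N:ℝ) + 1 ≤ 5 * Real.log (1 + x) := by
      have hl2pos : (0:ℝ) < Real.log 2 := by linarith
      have hNb2 : (N:ℝ) * Real.log 2 ≤ Real.log x + Real.log 2 := by
        rw [← le_div_iff₀ hl2pos]
        calc (N:ℝ) ≤ Real.log x / Real.log 2 + 1 := hNb
          _ = (Real.log x + Real.log 2) / Real.log 2 := by field_simp
      set A := Real.log (1 + x) with hA
      have hApos : 0 < A := lt_of_lt_of_le (by linarith) hA2
      have h3 : ((N:ℝ) + 1) * Real.log 2 ≤ 3 * A := by nlinarith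
      nlinarith
    nlinarith

lemma sum3_bound (g : Fin 3 → ℝ) (C : ℝ) (h : ∀ i, |g i| ≤ C) : |∑ i, g i| ≤ 3 * C := by
  calc |∑ i, g i| ≤ ∑ i, |g i| := Finset.abs_sum_le_sum_abs _ _
    _ ≤ ∑ _i : Fin 3, C := Finset.sum_le_sum (fun i _ => h i)
    _ = 3 * C := by simp [Finset.sum_const]

lemma term_bound (K : EuclideanSpace ℝ (Fin 3) → Fin 3 → Fin 3 → Fin 3 → Fin 3 → ℝ)
    (y : EuclideanSpace ℝ (Fin 3)) (b v : EuclideanSpace ℝ (Fin 3))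
    (k l m a c d : Fin 3) :
    |levi k l m * (fderiv ℝ K y (EuclideanSpace.single m (1 : ℝ)) a l c d) * b a * b c * (v d)|
      ≤ ‖fderiv ℝ K y‖ * (‖b‖ ^ 2 * ‖v‖) := by
  have hD : |fderiv ℝ K y (EuclideanSpace.single m (1 : ℝ)) a l c d| ≤ ‖fderiv ℝ K y‖ := by
    set w := fderiv ℝ K y (EuclideanSpace.single m (1 : ℝ)) with hw
    have h1 : ‖w‖ ≤ ‖fderiv ℝ K y‖ := by
      calc ‖w‖ ≤ ‖fderiv ℝ K y‖ * ‖EuclideanSpace.single m (1:ℝ)‖ :=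
        (fderiv ℝ K y).le_opNorm _
      _ = ‖fderiv ℝ K y‖ := by rw [EuclideanSpace.norm_single]; simp
    calc |w a l c d| = ‖w a l c d‖ := (Real.norm_eq_abs _).symm
      _ ≤ ‖w a l c‖ := norm_le_pi_norm _ d
      _ ≤ ‖w a l‖ := norm_le_pi_norm _ c
      _ ≤ ‖w a‖ := norm_le_pi_norm _ l
      _ ≤ ‖w‖ := norm_le_pi_norm _ a
      _ ≤ _ := h1
  calc |levi k l m * (fderiv ℝ K y (EuclideanSpace.single m (1 : ℝ)) a l c d) * b a * b c * (v d)|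
      = |levi k l m| * |fderiv ℝ K y (EuclideanSpace.single m (1 : ℝ)) a l c d| *
          |b a| * |b c| * |v d| := by rw [abs_mul, abs_mul, abs_mul, abs_mul]
    _ ≤ 1 * ‖fderiv ℝ K y‖ * ‖b‖ * ‖b‖ * ‖v‖ := by
        gcongr
        · exact levi_abs_le k l m
        · exact coord_abs_le_norm b a
        · exact coord_abs_le_norm b c
        · exact coord_abs_le_norm v d
    _ = ‖fderiv ℝ K y‖ * (‖b‖ ^ 2 * ‖v‖) := by ring

/-- The `L^∞` bound on the Peach–Koehler force: there is a dimensional constant `c` such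
that under a kernel-derivative bound `‖DK(s)‖ ≤ C₀/(ε√(ε²+|s|²))` and a mass-ratio bound
`ν(B̄(x,r)) ≤ Θr` on the image measure `ν` of the curve,
`|f(s)| ≤ c (C₀|b|²Θ/ε) log(1 + 2L/(εΘ))` for a.e. `s`. -/
theorem stmt10 :
    ∃ c : ℝ, 0 < c ∧
      ∀ (ε C₀ : ℝ), 0 < ε → 0 < C₀ →
      ∀ (K : EuclideanSpace ℝ (Fin 3) → Fin 3 → Fin 3 → Fin 3 → Fin 3 → ℝ),
        ContDiff ℝ 1 K →
        (∀ s : EuclideanSpace ℝ (Fin 3),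
          ‖fderiv ℝ K s‖ ≤ C₀ / (ε * Real.sqrt (ε ^ 2 + ‖s‖ ^ 2))) →
      ∀ (γ : ℝ → EuclideanSpace ℝ (Fin 3)) (Cγ : NNReal), LipschitzWith Cγ γ →
      ∀ L : ℝ, 0 < L → Function.Periodic γ L →
      (∀ᵐ s : ℝ, ‖deriv γ s‖ = 1) →
      ∀ (b : EuclideanSpace ℝ (Fin 3)) (Θ : ℝ), 0 < Θ →
      (∀ (x : EuclideanSpace ℝ (Fin 3)) (r : ℝ), 0 < r →
        Measure.map γ (volume.restrict (Set.Icc (0 : ℝ) L)) (Metric.closedBall x r) ≤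
          ENNReal.ofReal (Θ * r)) →
      ∀ᵐ s : ℝ,
        ‖pkF K γ L b s‖ ≤ c * (C₀ * ‖b‖ ^ 2 * Θ / ε) * Real.log (1 + 2 * L / (ε * Θ)) := by
  refine ⟨21870, by norm_num, ?_⟩
  intro ε C₀ hε hC₀ K hK hK' γ Cγ hγ L hL hper hunit b Θ hΘ hmass
  have hγc : Continuous γ := hγ.continuous
  -- the basic curve integral and its bound
  set lg := Real.log (1 + 2 * L / (ε * Θ)) with hlg
  have hlg0 : 0 ≤ lg := Real.log_nonneg (by
    have : 0 ≤ 2 * L / (ε * Θ) := by positivity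
    linarith)
  have hJbound : ∀ s : ℝ,
      ∫ t in (0:ℝ)..L, (Real.sqrt (ε ^ 2 + ‖γ s - γ t‖ ^ 2))⁻¹ ≤ 5 * Θ * lg := by
    intro s
    exact arith_bound ε Θ L _ hε hΘ hL
      (fun N => nu_int_bound ε Θ L hε hΘ hL γ hγc hmass (γ s) N)
  -- bound on pkG
  have hGbound : ∀ s : ℝ, ∀ k : Fin 3,
      |pkG K γ L b s k| ≤ 243 * C₀ * ‖b‖ ^ 2 / ε * (5 * Θ * lg) := by
    intro s k
    set g : ℝ → ℝ := fun t =>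
      243 * C₀ * ‖b‖ ^ 2 / ε * (Real.sqrt (ε ^ 2 + ‖γ s - γ t‖ ^ 2))⁻¹ with hg
    have hgc : Continuous g := by
      apply Continuous.mul continuous_const
      apply Continuous.inv₀
      · exact (continuous_const.add
          (((continuous_const.sub hγc).norm).pow 2)).sqrt
      · intro t
        have : ε ≤ Real.sqrt (ε ^ 2 + ‖γ s - γ t‖ ^ 2) := by
          calc ε = Real.sqrt (ε ^ 2) := (Real.sqrt_sq hε.le).symm
          _ ≤ _ := Real.sqrt_le_sqrt (le_add_of_nonneg_right (by positivity))
        exact ne_of_gt (lt_of_lt_of_le hε this)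
    have hptwise : ∀ t : ℝ, ‖deriv γ t‖ = 1 →
        ‖∑ l, ∑ m, ∑ a, ∑ c, ∑ d,
          levi k l m *
            (fderiv ℝ K (γ s - γ t) (EuclideanSpace.single m (1 : ℝ)) a l c d) *
            b a * b c * (deriv γ t d)‖ ≤ g t := by
      intro t ht
      set y := γ s - γ t with hy
      set M := ‖fderiv ℝ K y‖ with hM
      have hterm : ∀ l m a c d : Fin 3,
          |levi k l m * (fderiv ℝ K y (EuclideanSpace.single m (1 : ℝ)) a l c d) *
            b a * b c * (deriv γ t d)| ≤ M * ‖b‖ ^ 2 := by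
        intro l m a c d
        have := term_bound K y b (deriv γ t) k l m a c d
        rw [ht] at this
        simpa [mul_one] using this
      rw [Real.norm_eq_abs]
      have h5 : |∑ l, ∑ m, ∑ a, ∑ c, ∑ d,
          levi k l m * (fderiv ℝ K y (EuclideanSpace.single m (1 : ℝ)) a l c d) *
            b a * b c * (deriv γ t d)| ≤ 3 * (3 * (3 * (3 * (3 * (M * ‖b‖ ^ 2))))) := by
        apply sum3_bound; intro l
        apply sum3_bound; intro m
        apply sum3_bound; intro a
        apply sum3_bound; intro c
        apply sum3_bound; intro d
        exact hterm l m a c d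
      refine h5.trans ?_
      have hMle : M ≤ C₀ / (ε * Real.sqrt (ε ^ 2 + ‖y‖ ^ 2)) := hK' y
      have hS : 0 < Real.sqrt (ε ^ 2 + ‖y‖ ^ 2) := Real.sqrt_pos.mpr (by positivity)
      have hb2 : (0:ℝ) ≤ ‖b‖ ^ 2 := by positivity
      calc 3 * (3 * (3 * (3 * (3 * (M * ‖b‖ ^ 2)))))
          = 243 * M * ‖b‖ ^ 2 := by ring
        _ ≤ 243 * (C₀ / (ε * Real.sqrt (ε ^ 2 + ‖y‖ ^ 2))) * ‖b‖ ^ 2 := by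
            have h243 : (0:ℝ) < 243 := by norm_num
            apply mul_le_mul_of_nonneg_right _ hb2
            exact mul_le_mul_of_nonneg_left hMle h243.le
        _ = g t := by
            rw [hg]
            simp only [hy]
            field_simp
    have hbound : ∀ᵐ t ∂(volume.restrict (Set.uIoc (0:ℝ) L)),
        ‖∑ l, ∑ m, ∑ a, ∑ c, ∑ d,
          levi k l m *
            (fderiv ℝ K (γ s - γ t) (EuclideanSpace.single m (1 : ℝ)) a l c d) *
            b a * b c * (deriv γ t d)‖ ≤ g t := by
      have := ae_restrict_of_ae (μ := volume) (s := Set.uIoc (0:ℝ) L) hunit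
      filter_upwards [this] with t ht
      exact hptwise t ht
    have hmain := intervalIntegral.norm_integral_le_abs_of_norm_le hbound
      (hgc.intervalIntegrable 0 L)
    rw [pkG]
    have hgnonneg : 0 ≤ ∫ t in (0:ℝ)..L, g t := by
      apply intervalIntegral.integral_nonneg hL.le
      intro u _
      have : 0 < Real.sqrt (ε ^ 2 + ‖γ s - γ u‖ ^ 2) := Real.sqrt_pos.mpr (by positivity)
      rw [hg]; positivity
    have habs : |∫ t in (0:ℝ)..L, g t| = ∫ t in (0:ℝ)..L, g t := abs_of_nonneg hgnonneg
    have hInt : ∫ t in (0:ℝ)..L, g t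
        = 243 * C₀ * ‖b‖ ^ 2 / ε * ∫ t in (0:ℝ)..L, (Real.sqrt (ε ^ 2 + ‖γ s - γ t‖ ^ 2))⁻¹ := by
      rw [hg, intervalIntegral.integral_const_mul]
    calc |∫ t in (0:ℝ)..L, ∑ l, ∑ m, ∑ a, ∑ c, ∑ d,
          levi k l m *
            (fderiv ℝ K (γ s - γ t) (EuclideanSpace.single m (1 : ℝ)) a l c d) *
            b a * b c * (deriv γ t d)|
        ≤ |∫ t in (0:ℝ)..L, g t| := hmain
      _ = ∫ t in (0:ℝ)..L, g t := habs
      _ = 243 * C₀ * ‖b‖ ^ 2 / ε *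
            ∫ t in (0:ℝ)..L, (Real.sqrt (ε ^ 2 + ‖γ s - γ t‖ ^ 2))⁻¹ := hInt
      _ ≤ 243 * C₀ * ‖b‖ ^ 2 / ε * (5 * Θ * lg) := by
          apply mul_le_mul_of_nonneg_left (hJbound s) (by positivity)
  -- final assembly
  filter_upwards [hunit] with s hs
  set Gb := 243 * C₀ * ‖b‖ ^ 2 / ε * (5 * Θ * lg) with hGb
  have hGb0 : 0 ≤ Gb := by rw [hGb]; positivity
  have hFi : ∀ i : Fin 3,
      |∑ l, ∑ m, levi i l m * pkG K γ L b s l * (deriv γ s m)| ≤ 3 * (3 * Gb) := by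
    intro i
    apply sum3_bound; intro l
    apply sum3_bound; intro m
    calc |levi i l m * pkG K γ L b s l * (deriv γ s m)|
        = |levi i l m| * |pkG K γ L b s l| * |deriv γ s m| := by
          rw [abs_mul, abs_mul]
      _ ≤ 1 * Gb * 1 := by
          gcongr
          · exact levi_abs_le i l m
          · exact hGbound s l
          · calc |deriv γ s m| ≤ ‖deriv γ s‖ := coord_abs_le_norm _ m
              _ = 1 := hs
      _ = Gb := by ring
  have hnorm : ‖pkF K γ L b s‖ ≤ 18 * Gb := by
    rw [pkF, EuclideanSpace.norm_eq]
    have hsum : ∑ i : Fin 3, ‖((WithLp.equiv 2 (Fin 3 → ℝ)).symm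
          (fun i => ∑ l, ∑ m, levi i l m * pkG K γ L b s l * (deriv γ s m))) i‖ ^ 2
        ≤ (18 * Gb) ^ 2 := by
      have hterm : ∀ i ∈ (Finset.univ : Finset (Fin 3)),
          ‖((WithLp.equiv 2 (Fin 3 → ℝ)).symm
            (fun i => ∑ l, ∑ m, levi i l m * pkG K γ L b s l * (deriv γ s m))) i‖ ^ 2
            ≤ (3 * (3 * Gb)) ^ 2 := by
        intro i _
        rw [WithLp.equiv_symm_apply, PiLp.toLp_apply, Real.norm_eq_abs]
        exact pow_le_pow_left₀ (abs_nonneg _) (hFi i) 2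
      calc ∑ i : Fin 3, ‖((WithLp.equiv 2 (Fin 3 → ℝ)).symm
            (fun i => ∑ l, ∑ m, levi i l m * pkG K γ L b s l * (deriv γ s m))) i‖ ^ 2
          ≤ ∑ _i : Fin 3, (3 * (3 * Gb)) ^ 2 := Finset.sum_le_sum hterm
        _ ≤ (18 * Gb) ^ 2 := by
            rw [Finset.sum_const]
            simp only [Finset.card_univ, Fintype.card_fin, nsmul_eq_mul]
            push_cast
            nlinarith [sq_nonneg Gb]
    calc Real.sqrt (∑ i : Fin 3, ‖((WithLp.equiv 2 (Fin 3 → ℝ)).symm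
          (fun i => ∑ l, ∑ m, levi i l m * pkG K γ L b s l * (deriv γ s m))) i‖ ^ 2)
        ≤ Real.sqrt ((18 * Gb) ^ 2) := Real.sqrt_le_sqrt hsum
      _ = 18 * Gb := Real.sqrt_sq (by positivity)
  have hfinal : (18:ℝ) * Gb = 21870 * (C₀ * ‖b‖ ^ 2 * Θ / ε) * lg := by
    rw [hGb]
    field_simp
    ring
  linarith [hnorm, hfinal.le]
end
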